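/- Under the CBO setup, if γ ∈ (0,1), ξ > 0 and N ∈ ℕ are such that θ < 1, then there exists a random vector x_∞ : Ω → ℝ^d such that for every i = 1,…,N, x_k^i → x_∞ almost surely as k → ∞. -/

import Mathlib

open MeasureTheory ProbabilityTheory
open scoped RealInnerProductSpace

noncomputable section

/-- The diameter of a vector `y ∈ ℝ^N`: `max_i y_i - min_i y_i`. -/
def vdiam {N : ℕ} (y : Fin N → ℝ) : ℝ := (⨆ i, y i) - (⨅ i, y i)

/-- Data of the discrete consensus-based optimization (CBO) method with noisy objective
function: drift parameter `γ`, noise level `ξ`, weight parameter `α`, particle positions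
`x k i : Ω → ℝ^d`, diffusion noises `η k s i : Ω → ℝ`, and the values `fhat k i : Ω → ℝ`
returned by the stochastic oracle (i.e. `f̂(x_k^i, ω_k^i)`). -/
structure CBOData (N d : ℕ) (Ω : Type) [MeasurableSpace Ω] where
  γ : ℝ
  ξ : ℝ
  α : ℝ
  x : ℕ → Fin N → Ω → EuclideanSpace ℝ (Fin d)
  η : ℕ → Fin d → Fin N → Ω → ℝ
  fhat : ℕ → Fin N → Ω → ℝ

namespace CBOData

variable {N d : ℕ} {Ω : Type} [MeasurableSpace Ω]

/-- The noisy consensus point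
`x̂_k^α = (Σ_i x_k^i e^{-α f̂(x_k^i, ω_k^i)}) / (Σ_i e^{-α f̂(x_k^i, ω_k^i)})`. -/
def xhat (C : CBOData N d Ω) (k : ℕ) (ω : Ω) : EuclideanSpace ℝ (Fin d) :=
  (∑ i, Real.exp (-C.α * C.fhat k i ω))⁻¹ •
    ∑ i, Real.exp (-C.α * C.fhat k i ω) • C.x k i ω

/-- The vector of `s`-th components of the particles: `y_k^s = (x_{k,s}^1, …, x_{k,s}^N)`. -/
def y (C : CBOData N d Ω) (k : ℕ) (s : Fin d) (ω : Ω) : Fin N → ℝ :=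
  fun i => C.x k i ω s

/-- The contraction constant `θ = 1 - γ + 8 ξ (log(√2 N))^{1/2}`. -/
def th (C : CBOData N d Ω) : ℝ :=
  1 - C.γ + 8 * C.ξ * Real.sqrt (Real.log (Real.sqrt 2 * N))

/-- The σ-algebra generated by the noises of iteration `k`. -/
def noiseσ (C : CBOData N d Ω) (k : ℕ) : MeasurableSpace Ω :=
  ⨆ s : Fin d, ⨆ i : Fin N, MeasurableSpace.comap (C.η k s i) inferInstance

/-- The σ-algebra generated by the particle positions and the oracle evaluations up to
iteration `k`, together with the noises of iterations `< k`. -/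
def histσ (C : CBOData N d Ω) (k : ℕ) : MeasurableSpace Ω :=
  ((⨆ (l : ℕ) (_ : l ≤ k), ⨆ i : Fin N,
      (MeasurableSpace.comap (C.x l i) inferInstance ⊔
        MeasurableSpace.comap (C.fhat l i) inferInstance)) ⊔
    ⨆ (l : ℕ) (_ : l < k), ⨆ s : Fin d, ⨆ i : Fin N,
      MeasurableSpace.comap (C.η l s i) inferInstance)

/-- `σ_k`: the σ-algebra generated by `{x_l^i : l ≤ k}` and `{η_{l,s}^i : l ≤ k}`. -/
def sigmak (C : CBOData N d Ω) (k : ℕ) : MeasurableSpace Ω :=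
  ((⨆ (l : ℕ) (_ : l ≤ k), ⨆ i : Fin N,
      MeasurableSpace.comap (C.x l i) inferInstance) ⊔
    ⨆ (l : ℕ) (_ : l ≤ k), ⨆ s : Fin d, ⨆ i : Fin N,
      MeasurableSpace.comap (C.η l s i) inferInstance)

/-- The hypotheses of the CBO setup: `N, d ≥ 1`, `γ ∈ (0,1)`, `ξ > 0`, `α > 0`,
measurability of all the random variables, the noises are i.i.d. centered Gaussian with
variance `ξ²` and, at each iteration `k`, the family of iteration-`k` noises is independent
of the particle positions and oracle evaluations up to iteration `k`; finally the particles
evolve according to the (componentwise) CBO update rule. -/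
structure Hyp (C : CBOData N d Ω) (P : Measure Ω) : Prop where
  hN : 1 ≤ N
  hd : 1 ≤ d
  hγ : C.γ ∈ Set.Ioo (0:ℝ) 1
  hξ : 0 < C.ξ
  hα : 0 < C.α
  meas_x : ∀ k i, Measurable (C.x k i)
  meas_η : ∀ k s i, Measurable (C.η k s i)
  meas_fhat : ∀ k i, Measurable (C.fhat k i)
  η_gauss : ∀ k s i, Measure.map (C.η k s i) P = gaussianReal 0 ⟨C.ξ ^ 2, sq_nonneg C.ξ⟩
  η_iid : iIndepFun
    (fun p : ℕ × Fin d × Fin N => C.η p.1 p.2.1 p.2.2) P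
  η_indep_hist : ∀ k, Indep (C.noiseσ k) (C.histσ k) P
  evol : ∀ k i s ω, C.x (k+1) i ω s =
    C.x k i ω s - C.γ * (C.x k i ω s - C.xhat k ω s)
      - (C.x k i ω s - C.xhat k ω s) * C.η k s i ω

end CBOData

open Filter

lemma pdf_mul_exp (ξ : ℝ) (hξ : 0 < ξ) (t x : ℝ) :
    gaussianPDFReal 0 ⟨ξ^2, sq_nonneg ξ⟩ x * Real.exp (t * x)
      = Real.exp (t^2 * ξ^2 / 2) * gaussianPDFReal (t * ξ^2) ⟨ξ^2, sq_nonneg ξ⟩ x := by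
  simp only [gaussianPDFReal]
  push_cast
  have h2 : (ξ:ℝ)^2 ≠ 0 := by positivity
  have hx : -(x - 0)^2/(2*ξ^2) + t*x = t^2*ξ^2/2 + (-(x - t*ξ^2)^2/(2*ξ^2)) := by
    field_simp
    ring
  rw [mul_assoc, ← Real.exp_add]
  change _ * Real.exp (-(x - 0)^2/(2*ξ^2) + t*x) = Real.exp (t^2*ξ^2/2) * (_ * Real.exp (-(x - t*ξ^2)^2/(2*ξ^2)))
  rw [hx, Real.exp_add]
  ring

lemma gaussian_exp (ξ : ℝ) (hξ : 0 < ξ) (t : ℝ) :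
    Integrable (fun x => Real.exp (t * x)) (gaussianReal 0 ⟨ξ^2, sq_nonneg ξ⟩)
    ∧ ∫ x, Real.exp (t * x) ∂(gaussianReal 0 ⟨ξ^2, sq_nonneg ξ⟩)
        = Real.exp (t^2 * ξ^2 / 2) := by
  have hv : (⟨ξ^2, sq_nonneg ξ⟩ : NNReal) ≠ 0 := by
    simp [← NNReal.coe_ne_zero]; positivity
  rw [gaussianReal_of_var_ne_zero 0 hv]
  have hpdf : ∀ x, gaussianPDF 0 ⟨ξ^2, sq_nonneg ξ⟩ x
      = ((gaussianPDFReal 0 ⟨ξ^2, sq_nonneg ξ⟩ x).toNNReal : ENNReal) := fun x => rfl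
  have hmeas : Measurable (fun x => (gaussianPDFReal 0 ⟨ξ^2, sq_nonneg ξ⟩ x).toNNReal) :=
    (measurable_gaussianPDFReal _ _).real_toNNReal
  have hwd : volume.withDensity (gaussianPDF 0 ⟨ξ^2, sq_nonneg ξ⟩)
      = volume.withDensity (fun x => ((gaussianPDFReal 0 ⟨ξ^2, sq_nonneg ξ⟩ x).toNNReal : ENNReal)) := rfl
  rw [hwd]
  have key : ∀ x, (gaussianPDFReal 0 ⟨ξ^2, sq_nonneg ξ⟩ x).toNNReal • Real.exp (t * x)
      = Real.exp (t^2 * ξ^2 / 2) * gaussianPDFReal (t * ξ^2) ⟨ξ^2, sq_nonneg ξ⟩ x := by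
    intro x
    rw [NNReal.smul_def, smul_eq_mul, Real.coe_toNNReal (gaussianPDFReal 0 ⟨ξ^2, sq_nonneg ξ⟩ x) (gaussianPDFReal_nonneg _ _ _),
      pdf_mul_exp ξ hξ t x]
  have hint : Integrable (fun x => (gaussianPDFReal 0 ⟨ξ^2, sq_nonneg ξ⟩ x).toNNReal • Real.exp (t * x)) volume := by
    simp only [key]
    exact (integrable_gaussianPDFReal _ _).const_mul _
  constructor
  · rw [← integrable_withDensity_iff_integrable_smul hmeas]  at hint
    exact hint
  · rw [integral_withDensity_eq_integral_smul hmeas]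
    simp only [key]
    rw [integral_const_mul, integral_gaussianPDFReal_eq_one _ hv, mul_one]
lemma max_abs_bound {Ω : Type} [MeasurableSpace Ω] (P : Measure Ω) [IsProbabilityMeasure P]
    {N : ℕ} (hN : 1 ≤ N) (ξ : ℝ) (hξ : 0 < ξ)
    (X : Fin N → Ω → ℝ) (hmeas : ∀ i, Measurable (X i))
    (hlaw : ∀ i, Measure.map (X i) P = gaussianReal 0 ⟨ξ^2, sq_nonneg ξ⟩) :
    Integrable (fun ω => ⨆ i, |X i ω|) P ∧
    ∫ ω, (⨆ i, |X i ω|) ∂P ≤ 4 * ξ * Real.sqrt (Real.log (Real.sqrt 2 * N)) := by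
  haveI : NeZero N := ⟨by omega⟩
  set L : ℝ := Real.log (Real.sqrt 2 * N) with hLdef
  have hsqrt2 : (1:ℝ) < Real.sqrt 2 := by
    nlinarith [Real.sq_sqrt (by norm_num : (0:ℝ) ≤ 2), Real.sqrt_nonneg 2]
  have hN1 : (1:ℝ) ≤ N := by exact_mod_cast hN
  have hL : 0 < L := Real.log_pos (by nlinarith)
  have hsL : 0 < Real.sqrt L := Real.sqrt_pos.2 hL
  set lam : ℝ := 4 * Real.sqrt L / ξ with hlamdef
  have hlam : 0 < lam := by positivity
  set M : Ω → ℝ := fun ω => ⨆ i, |X i ω| with hMdef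
  have hMmeas : Measurable M := Measurable.iSup (fun i => (hmeas i).abs)
  have hMge : ∀ ω i, |X i ω| ≤ M ω := fun ω i =>
    le_ciSup (f := fun j => |X j ω|) (Set.Finite.bddAbove (Set.finite_range _)) i
  have hMnonneg : ∀ ω, 0 ≤ M ω := fun ω => (abs_nonneg _).trans (hMge ω ⟨0, by omega⟩)
  -- integrability and integral of exp(c * X i)
  have hXint : ∀ (c : ℝ) (i : Fin N), Integrable (fun ω => Real.exp (c * X i ω)) P ∧
      ∫ ω, Real.exp (c * X i ω) ∂P = Real.exp (c^2 * ξ^2 / 2) := by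
    intro c i
    have hg : Integrable (fun x => Real.exp (c * x)) (Measure.map (X i) P) := by
      rw [hlaw i]; exact (gaussian_exp ξ hξ c).1
    have hsm : AEStronglyMeasurable (fun x => Real.exp (c * x)) (Measure.map (X i) P) :=
      (Real.continuous_exp.comp (continuous_const.mul continuous_id)).aestronglyMeasurable
    constructor
    · exact (integrable_map_measure hsm (hmeas i).aemeasurable).1 hg
    · rw [← integral_map (hmeas i).aemeasurable hsm, hlaw i]
      exact (gaussian_exp ξ hξ c).2
  -- pointwise: exp(lam * M ω) ≤ ∑ i, (exp(lam * X i ω) + exp(-lam * X i ω))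
  have hptwise : ∀ ω, Real.exp (lam * M ω)
      ≤ ∑ i, (Real.exp (lam * X i ω) + Real.exp (-lam * X i ω)) := by
    intro ω
    obtain ⟨i0, hi0⟩ := Finite.exists_max (fun i => |X i ω|)
    have hM0 : M ω = |X i0 ω| := le_antisymm (ciSup_le hi0) (hMge ω i0)
    have h1 : Real.exp (lam * M ω) ≤ Real.exp (lam * X i0 ω) + Real.exp (-lam * X i0 ω) := by
      rw [hM0]
      rcases abs_cases (X i0 ω) with ⟨h, _⟩ | ⟨h, _⟩
      · rw [h]; nlinarith [Real.exp_pos (-lam * X i0 ω)]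
      · rw [h, mul_neg, ← neg_mul]; nlinarith [Real.exp_pos (lam * X i0 ω)]
    refine h1.trans (Finset.single_le_sum (f := fun i => Real.exp (lam * X i ω) + Real.exp (-lam * X i ω)) (fun i _ => by positivity) (Finset.mem_univ i0))
  have hsumint : Integrable (fun ω => ∑ i, (Real.exp (lam * X i ω) + Real.exp (-lam * X i ω))) P :=
    integrable_finset_sum _ (fun i _ => ((hXint lam i).1.add (hXint (-lam) i).1)
)
  have hexpMint : Integrable (fun ω => Real.exp (lam * M ω)) P := by
    refine Integrable.mono hsumint ((Real.measurable_exp.comp (hMmeas.const_mul lam)).aestronglyMeasurable) ?_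
    filter_upwards with ω
    rw [Real.norm_eq_abs, abs_of_pos (Real.exp_pos _), Real.norm_eq_abs]
    exact (hptwise ω).trans (le_abs_self _)
  have hMint : Integrable M P := by
    refine Integrable.mono (hexpMint.const_mul lam⁻¹) hMmeas.aestronglyMeasurable ?_
    filter_upwards with ω
    rw [Real.norm_eq_abs, abs_of_nonneg (hMnonneg ω), Real.norm_eq_abs]
    have h1 : lam * M ω ≤ Real.exp (lam * M ω) := (Real.add_one_le_exp _).trans' (by linarith)
    have : M ω ≤ lam⁻¹ * Real.exp (lam * M ω) := by
      rw [le_inv_mul_iff₀ hlam]; linarith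
    exact this.trans (le_abs_self _)
  refine ⟨hMint, ?_⟩
  -- Jensen
  have hjensen : Real.exp (∫ ω, lam * M ω ∂P) ≤ ∫ ω, Real.exp (lam * M ω) ∂P := by
    refine convexOn_exp.map_integral_le Real.continuous_exp.continuousOn isClosed_univ ?_ (hMint.const_mul lam) ?_
    · filter_upwards with ω using Set.mem_univ _
    · exact hexpMint
  have hsumval : ∫ ω, (∑ i, (Real.exp (lam * X i ω) + Real.exp (-lam * X i ω))) ∂P
      = 2 * N * Real.exp (lam^2 * ξ^2 / 2) := by
    rw [integral_finset_sum (μ := P) Finset.univ (f := fun i ω => Real.exp (lam * X i ω) + Real.exp (-lam * X i ω)) (fun i _ => ((hXint lam i).1.add (hXint (-lam) i).1))]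
    have : ∀ i : Fin N, ∫ ω, (Real.exp (lam * X i ω) + Real.exp (-lam * X i ω)) ∂P
        = 2 * Real.exp (lam^2 * ξ^2 / 2) := by
      intro i
      rw [integral_add (hXint lam i).1 (hXint (-lam) i).1, (hXint lam i).2, (hXint (-lam) i).2]
      ring_nf
    simp only [this, Finset.sum_const, Finset.card_univ, Fintype.card_fin, nsmul_eq_mul]
    ring
  have hbound : Real.exp (lam * ∫ ω, M ω ∂P) ≤ 2 * N * Real.exp (lam^2 * ξ^2 / 2) := by
    rw [← integral_const_mul]
    refine hjensen.trans ?_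
    rw [← hsumval]
    exact integral_mono hexpMint hsumint (fun ω => hptwise ω)
  -- take logs
  have hlog : lam * ∫ ω, M ω ∂P ≤ Real.log (2 * N) + lam^2 * ξ^2 / 2 := by
    have h2N : (0:ℝ) < 2 * N := by positivity
    have : (2:ℝ) * N * Real.exp (lam^2 * ξ^2 / 2) = Real.exp (Real.log (2*N) + lam^2 * ξ^2/2) := by
      rw [Real.exp_add, Real.exp_log h2N]
    rw [this] at hbound
    exact Real.exp_le_exp.1 hbound
  -- arithmetic
  have hlog2N : Real.log (2 * N) ≤ 8 * L := by
    have h1 : Real.log (2 * N) = Real.log 2 + Real.log N :=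
      Real.log_mul (by norm_num) (by positivity)
    have h2 : L = Real.log 2 / 2 + Real.log N := by
      rw [hLdef, Real.log_mul (by positivity) (by positivity), Real.log_sqrt (by norm_num)]
    have h3 : 0 ≤ Real.log N := Real.log_nonneg hN1
    have h4 : 0 < Real.log 2 := Real.log_pos (by norm_num)
    rw [h1, h2]; linarith
  have hsq : Real.sqrt L ^ 2 = L := Real.sq_sqrt hL.le
  have hξ2 : lam * (4 * ξ * Real.sqrt L) ≥ Real.log (2*N) + lam^2 * ξ^2/2 := by
    rw [hlamdef]
    have : 4 * Real.sqrt L / ξ * (4 * ξ * Real.sqrt L) = 16 * L := by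
      field_simp; nlinarith [hsq]
    rw [this]
    have : (4 * Real.sqrt L / ξ)^2 * ξ^2 / 2 = 8 * L := by
      field_simp; nlinarith [hsq]
    rw [this]
    linarith
  have := hlog.trans hξ2.le
  exact le_of_mul_le_mul_left (by linarith) hlam
section Aux

variable {N d : ℕ} {Ω : Type} [MeasurableSpace Ω]

lemma vdiam_nonneg [NeZero N] (u : Fin N → ℝ) : 0 ≤ vdiam u := by
  have h1 : u 0 ≤ ⨆ i, u i := le_ciSup (Set.Finite.bddAbove (Set.finite_range _)) 0
  have h2 : ⨅ i, u i ≤ u 0 := ciInf_le (Set.Finite.bddBelow (Set.finite_range _)) 0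
  simp only [vdiam]; linarith

lemma fin_le_csup [NeZero N] (u : Fin N → ℝ) (i : Fin N) : u i ≤ ⨆ j, u j :=
  le_ciSup (Set.Finite.bddAbove (Set.finite_range _)) i

lemma cinf_le_fin [NeZero N] (u : Fin N → ℝ) (i : Fin N) : ⨅ j, u j ≤ u i :=
  ciInf_le (Set.Finite.bddBelow (Set.finite_range _)) i

lemma abs_sub_le_vdiam [NeZero N] (u : Fin N → ℝ) (i : Fin N) {a : ℝ}
    (h1 : ⨅ j, u j ≤ a) (h2 : a ≤ ⨆ j, u j) : |u i - a| ≤ vdiam u := by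
  rw [abs_le, vdiam]
  constructor
  · have := cinf_le_fin u i; linarith
  · have := fin_le_csup u i; linarith

lemma xhat_apply (C : CBOData N d Ω) (k : ℕ) (ω : Ω) (s : Fin d) :
    C.xhat k ω s = (∑ i, Real.exp (-C.α * C.fhat k i ω))⁻¹
      * ∑ i, Real.exp (-C.α * C.fhat k i ω) * C.x k i ω s := by
  simp only [CBOData.xhat, PiLp.smul_apply, smul_eq_mul]
  congr 1
  simp [WithLp.ofLp_sum, Finset.sum_apply]

lemma xhat_bounds [NeZero N] (C : CBOData N d Ω) (k : ℕ) (ω : Ω) (s : Fin d) :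
    (⨅ i, C.y k s ω i) ≤ C.xhat k ω s ∧ C.xhat k ω s ≤ ⨆ i, C.y k s ω i := by
  set w : Fin N → ℝ := fun i => Real.exp (-C.α * C.fhat k i ω) with hw
  have hwpos : ∀ i, 0 < w i := fun i => Real.exp_pos _
  have hsum : 0 < ∑ i, w i := Finset.sum_pos (fun i _ => hwpos i) ⟨0, Finset.mem_univ 0⟩
  have happ : C.xhat k ω s = (∑ i, w i)⁻¹ * ∑ i, w i * C.y k s ω i := xhat_apply C k ω s
  constructor
  · rw [happ, le_inv_mul_iff₀ hsum]
    calc (∑ i, w i) * (⨅ i, C.y k s ω i) = ∑ i, w i * (⨅ j, C.y k s ω j) := by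
          rw [Finset.sum_mul]
      _ ≤ ∑ i, w i * C.y k s ω i :=
          Finset.sum_le_sum (fun i _ => mul_le_mul_of_nonneg_left (cinf_le_fin _ i) (hwpos i).le)
  · rw [happ, inv_mul_le_iff₀ hsum]
    calc ∑ i, w i * C.y k s ω i
        ≤ ∑ i, w i * (⨆ j, C.y k s ω j) :=
          Finset.sum_le_sum (fun i _ => mul_le_mul_of_nonneg_left (fin_le_csup _ i) (hwpos i).le)
      _ = (∑ i, w i) * (⨆ i, C.y k s ω i) := by rw [Finset.sum_mul]

end Aux
section Aux2

variable {N d : ℕ} {Ω : Type} [MeasurableSpace Ω] {P : Measure Ω}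

lemma diam_rec [NeZero N] (C : CBOData N d Ω) (hC : C.Hyp P) (k : ℕ) (s : Fin d) (ω : Ω) :
    vdiam (C.y (k+1) s ω) ≤ (1 - C.γ + 2 * ⨆ i, |C.η k s i ω|) * vdiam (C.y k s ω) := by
  set M := ⨆ i, |C.η k s i ω| with hM
  have hMnn : 0 ≤ M := (abs_nonneg _).trans (fin_le_csup (fun i => |C.η k s i ω|) 0)
  set D := vdiam (C.y k s ω) with hD
  have hDnn : 0 ≤ D := vdiam_nonneg _
  have ha : ∀ i, |C.y k s ω i - C.xhat k ω s| ≤ D :=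
    fun i => abs_sub_le_vdiam _ i (xhat_bounds C k ω s).1 (xhat_bounds C k ω s).2
  have hη : ∀ i, |C.η k s i ω| ≤ M := fun i => fin_le_csup (fun l => |C.η k s l ω|) i
  have hγ1 : C.γ ≤ 1 := hC.hγ.2.le
  have hkey : ∀ i j, C.y (k+1) s ω i - C.y (k+1) s ω j ≤ (1 - C.γ + 2*M) * D := by
    intro i j
    have hyi : C.y (k+1) s ω i = C.y k s ω i - C.γ * (C.y k s ω i - C.xhat k ω s)
        - (C.y k s ω i - C.xhat k ω s) * C.η k s i ω := hC.evol k i s ω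
    have hyj : C.y (k+1) s ω j = C.y k s ω j - C.γ * (C.y k s ω j - C.xhat k ω s)
        - (C.y k s ω j - C.xhat k ω s) * C.η k s j ω := hC.evol k j s ω
    have hij : |C.y k s ω i - C.y k s ω j| ≤ D := by
      have h1 : ⨅ l, C.y k s ω l ≤ C.y k s ω j := cinf_le_fin _ j
      have h2 : C.y k s ω j ≤ ⨆ l, C.y k s ω l := fin_le_csup _ j
      exact abs_sub_le_vdiam _ i h1 h2
    have hpi : |(C.y k s ω i - C.xhat k ω s) * C.η k s i ω| ≤ D * M := by
      rw [abs_mul]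
      exact mul_le_mul (ha i) (hη i) (abs_nonneg _) hDnn
    have hpj : |(C.y k s ω j - C.xhat k ω s) * C.η k s j ω| ≤ D * M := by
      rw [abs_mul]
      exact mul_le_mul (ha j) (hη j) (abs_nonneg _) hDnn
    rw [hyi, hyj]
    have habs1 := abs_le.1 hij
    have habs2 := abs_le.1 hpi
    have habs3 := abs_le.1 hpj
    nlinarith [habs1.1, habs1.2, habs2.1, habs2.2, habs3.1, habs3.2]
  obtain ⟨imax, himax⟩ := Finite.exists_max (C.y (k+1) s ω)
  obtain ⟨imin, himin⟩ := Finite.exists_min (C.y (k+1) s ω)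
  have h1 : (⨆ i, C.y (k+1) s ω i) ≤ C.y (k+1) s ω imax := ciSup_le himax
  have h2 : C.y (k+1) s ω imin ≤ ⨅ i, C.y (k+1) s ω i := le_ciInf himin
  have h3 := hkey imax imin
  simp only [vdiam]
  linarith

lemma step_bound [NeZero N] (C : CBOData N d Ω) (hC : C.Hyp P) (k : ℕ) (s : Fin d) (ω : Ω)
    (i : Fin N) :
    |C.y (k+1) s ω i - C.y k s ω i| ≤ (C.γ + ⨆ j, |C.η k s j ω|) * vdiam (C.y k s ω) := by
  set M := ⨆ j, |C.η k s j ω| with hM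
  have hMnn : 0 ≤ M := (abs_nonneg _).trans (fin_le_csup (fun j => |C.η k s j ω|) 0)
  set D := vdiam (C.y k s ω) with hD
  have hDnn : 0 ≤ D := vdiam_nonneg _
  have ha : |C.y k s ω i - C.xhat k ω s| ≤ D :=
    abs_sub_le_vdiam _ i (xhat_bounds C k ω s).1 (xhat_bounds C k ω s).2
  have hη : |C.η k s i ω| ≤ M := fin_le_csup (fun l => |C.η k s l ω|) i
  have hyi : C.y (k+1) s ω i = C.y k s ω i - C.γ * (C.y k s ω i - C.xhat k ω s)
      - (C.y k s ω i - C.xhat k ω s) * C.η k s i ω := hC.evol k i s ω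
  have : C.y (k+1) s ω i - C.y k s ω i
      = -(C.γ * (C.y k s ω i - C.xhat k ω s)) - (C.y k s ω i - C.xhat k ω s) * C.η k s i ω := by
    rw [hyi]; ring
  rw [this]
  have hγ0 : 0 < C.γ := hC.hγ.1
  calc |(-(C.γ * (C.y k s ω i - C.xhat k ω s)) - (C.y k s ω i - C.xhat k ω s) * C.η k s i ω)|
      ≤ |C.γ * (C.y k s ω i - C.xhat k ω s)| + |(C.y k s ω i - C.xhat k ω s) * C.η k s i ω| := by
        rw [← abs_neg (C.γ * _)] ; exact abs_sub _ _
    _ ≤ C.γ * D + D * M := by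
        rw [abs_mul, abs_mul, abs_of_pos hγ0]
        exact add_le_add (mul_le_mul_of_nonneg_left ha hγ0.le)
          (mul_le_mul ha hη (abs_nonneg _) hDnn)
    _ = (C.γ + M) * D := by ring
end Aux2
section Aux3
open Filter

lemma tendsto_euclidean {d : ℕ} {f : ℕ → EuclideanSpace ℝ (Fin d)} {L : EuclideanSpace ℝ (Fin d)}
    (h : ∀ s, Tendsto (fun k => f k s) atTop (nhds (L s))) : Tendsto f atTop (nhds L) := by
  have h1 : Tendsto (fun k => (EuclideanSpace.equiv (Fin d) ℝ) (f k)) atTop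
      (nhds ((EuclideanSpace.equiv (Fin d) ℝ) L)) := tendsto_pi_nhds.2 h
  have h2 := ((EuclideanSpace.equiv (Fin d) ℝ).symm.continuous.tendsto _).comp h1
  simpa [Function.comp_def] using h2

lemma tendsto_euclidean_coord {d : ℕ} {f : ℕ → EuclideanSpace ℝ (Fin d)}
    {L : EuclideanSpace ℝ (Fin d)} (h : Tendsto f atTop (nhds L)) (s : Fin d) :
    Tendsto (fun k => f k s) atTop (nhds (L s)) := by
  have h1 := ((EuclideanSpace.equiv (Fin d) ℝ).continuous.tendsto _).comp h
  exact (tendsto_pi_nhds.1 h1) s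

variable {N d : ℕ} {Ω : Type} [MeasurableSpace Ω] {P : Measure Ω} [IsProbabilityMeasure P]

lemma vec_map_eq {C : CBOData N d Ω} (hC : C.Hyp P) (k : ℕ) (s : Fin d) :
    Measure.map (fun ω (i : Fin N) => C.η k s i ω) P
      = Measure.pi (fun _ : Fin N => gaussianReal 0 ⟨C.ξ^2, sq_nonneg C.ξ⟩) := by
  have hσ : ∀ v : NNReal, SigmaFinite (gaussianReal 0 v) := fun v => inferInstance
  refine (@Measure.pi_eq (Fin N) (fun _ => ℝ) _ _ _ (fun _ => hσ _) _ ?_).symm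
  intro sets hsets
  rw [Measure.map_apply (measurable_pi_lambda _ (fun i => hC.meas_η k s i))
    (MeasurableSet.univ_pi hsets)]
  classical
  set g : Fin N → ℕ × Fin d × Fin N := fun i => (k, s, i) with hg
  have hginj : Function.Injective g := by
    intro a b hab
    simpa [hg, Prod.ext_iff] using hab
  set S : Finset (ℕ × Fin d × Fin N) := Finset.univ.image g with hS
  set sets' : (ℕ × Fin d × Fin N) → Set ℝ := fun p => sets p.2.2 with hsets'
  have hpre : (fun ω (i : Fin N) => C.η k s i ω) ⁻¹' (Set.pi Set.univ sets)
      = ⋂ p ∈ S, (fun ω => C.η p.1 p.2.1 p.2.2 ω) ⁻¹' sets' p := by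
    ext ω
    simp only [Set.mem_preimage, Set.mem_univ_pi, Set.mem_iInter, hS, Finset.mem_image,
      Finset.mem_univ, true_and]
    constructor
    · rintro h p ⟨i, rfl⟩
      exact h i
    · intro h i
      exact h (g i) ⟨i, rfl⟩
  rw [hpre]
  have := hC.η_iid.measure_inter_preimage_eq_mul S
    (sets := sets') (fun p _ => hsets p.2.2)
  rw [this, hS, Finset.prod_image (fun a _ b _ hab => hginj hab)]
  refine Finset.prod_congr rfl (fun i _ => ?_)
  rw [← hC.η_gauss k s i, Measure.map_apply (hC.meas_η k s i) (hsets i)]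
end Aux3
/-- Under the CBO setup, if `θ < 1` then there exists a random vector `x_∞ : Ω → ℝ^d`
such that every particle converges to `x_∞` almost surely. -/
theorem stmt8 {N d : ℕ} {Ω : Type} [MeasurableSpace Ω] (P : Measure Ω)
    [IsProbabilityMeasure P] (C : CBOData N d Ω) (hC : C.Hyp P)
    (hθ : C.th < 1) :
    ∃ xinf : Ω → EuclideanSpace ℝ (Fin d), ∀ i : Fin N,
      ∀ᵐ ω ∂P, Tendsto (fun k => C.x k i ω) atTop (nhds (xinf ω)) := by
  classical
  haveI : NeZero N := ⟨by have := hC.hN; omega⟩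
  have hξ : 0 < C.ξ := hC.hξ
  have hγ0 : 0 < C.γ := hC.hγ.1
  have hγ1 : C.γ < 1 := hC.hγ.2
  set M : Fin d → ℕ → Ω → ℝ := fun s k ω => ⨆ i, |C.η k s i ω| with hMdef
  set Z : Fin d → ℕ → Ω → ℝ := fun s k ω => Real.log (1 - C.γ + 2 * M s k ω) with hZdef
  have hMnn : ∀ s k ω, 0 ≤ M s k ω :=
    fun s k ω => (abs_nonneg _).trans (fin_le_csup (fun i => |C.η k s i ω|) 0)
  have hWpos : ∀ s k ω, 0 < 1 - C.γ + 2 * M s k ω := fun s k ω => by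
    have := hMnn s k ω; linarith
  have hMmeas : ∀ s k, Measurable (M s k) :=
    fun s k => Measurable.iSup (fun i => (hC.meas_η k s i).abs)
  have hZmeas : ∀ s k, Measurable (Z s k) :=
    fun s k => (((hMmeas s k).const_mul 2).const_add (1 - C.γ)).log
  set B : ℝ := 4 * C.ξ * Real.sqrt (Real.log (Real.sqrt 2 * N)) with hBdef
  have hMbd : ∀ s k, Integrable (M s k) P ∧ ∫ ω, M s k ω ∂P ≤ B := fun s k =>
    max_abs_bound P hC.hN C.ξ hξ (fun i => C.η k s i) (fun i => hC.meas_η k s i)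
      (fun i => hC.η_gauss k s i)
  have hθB : C.th = 1 - C.γ + 2 * B := by rw [CBOData.th, hBdef]; ring
  have hZint : ∀ s k, Integrable (Z s k) P := by
    intro s k
    refine Integrable.mono (((hMbd s k).1.const_mul 2).add
      (integrable_const |Real.log (1 - C.γ)|)) (hZmeas s k).aestronglyMeasurable ?_
    filter_upwards with ω
    rw [Real.norm_eq_abs, Real.norm_eq_abs]
    have hlb : Real.log (1 - C.γ) ≤ Z s k ω := by
      refine Real.log_le_log (by linarith) ?_
      have := hMnn s k ω; linarith
    have hub : Z s k ω ≤ 2 * M s k ω := by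
      have := Real.log_le_sub_one_of_pos (hWpos s k ω)
      simp only [hZdef] at *
      linarith
    have h2M : 0 ≤ 2 * M s k ω := by have := hMnn s k ω; linarith
    have hc : 0 ≤ |Real.log (1 - C.γ)| := abs_nonneg _
    have hneg := neg_abs_le (Real.log (1 - C.γ))
    have hgoal : |Z s k ω| ≤ 2 * M s k ω + |Real.log (1 - C.γ)| := by
      rw [abs_le]
      exact ⟨by linarith, by linarith⟩
    exact hgoal.trans (le_abs_self _)
  have hμbd : ∀ s, ∫ ω, Z s 0 ω ∂P ≤ C.th - 1 := by
    intro s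
    have h1 : ∀ ω, Z s 0 ω ≤ (-C.γ) + 2 * M s 0 ω := by
      intro ω
      have := Real.log_le_sub_one_of_pos (hWpos s 0 ω)
      simp only [hZdef] at *; linarith
    have h2 : Integrable (fun ω => (-C.γ) + 2 * M s 0 ω) P :=
      (integrable_const _).add ((hMbd s 0).1.const_mul 2)
    have h3 := integral_mono (hZint s 0) h2 h1
    rw [integral_add (integrable_const _) ((hMbd s 0).1.const_mul 2), integral_const,
      integral_const_mul, probReal_univ] at h3
    simp only [ENNReal.toReal_one, smul_eq_mul, one_mul] at h3
    have := (hMbd s 0).2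
    rw [hθB]; linarith
  have hμneg : ∀ s, ∫ ω, Z s 0 ω ∂P < 0 := fun s => lt_of_le_of_lt (hμbd s) (by linarith)
  -- identical distribution
  set φ : (Fin N → ℝ) → ℝ := fun v => Real.log (1 - C.γ + 2 * ⨆ i, |v i|) with hφdef
  have hφmeas : Measurable φ :=
    (((Measurable.iSup (fun i => (measurable_pi_apply i).abs)).const_mul 2).const_add
      (1 - C.γ)).log
  have hident : ∀ (s : Fin d) (k : ℕ), IdentDistrib (Z s k) (Z s 0) P P := by
    intro s k
    have hV : IdentDistrib (fun ω (i : Fin N) => C.η k s i ω)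
        (fun ω (i : Fin N) => C.η 0 s i ω) P P :=
      ⟨(measurable_pi_lambda _ (fun i => hC.meas_η k s i)).aemeasurable,
       (measurable_pi_lambda _ (fun i => hC.meas_η 0 s i)).aemeasurable,
       by rw [vec_map_eq hC k s, vec_map_eq hC 0 s]⟩
    exact hV.comp hφmeas
  -- pairwise independence
  have hindep : ∀ s : Fin d, Pairwise (Function.onFun (IndepFun · · P) (fun k => Z s k)) := by
    intro s k j hkj
    set Sk := Finset.univ.image (fun i : Fin N => ((k, s, i) : ℕ × Fin d × Fin N)) with hSk
    set Sj := Finset.univ.image (fun i : Fin N => ((j, s, i) : ℕ × Fin d × Fin N)) with hSj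
    have hdisj : Disjoint Sk Sj := by
      rw [Finset.disjoint_left]
      rintro p hp hq
      rw [hSk, Finset.mem_image] at hp
      rw [hSj, Finset.mem_image] at hq
      obtain ⟨a, _, rfl⟩ := hp
      obtain ⟨b, _, hb⟩ := hq
      exact hkj (congrArg Prod.fst hb).symm
    have hbase := hC.η_iid.indepFun_finset Sk Sj hdisj
      (fun p => hC.meas_η p.1 p.2.1 p.2.2)
    have hmemk : ∀ i : Fin N, ((k, s, i) : ℕ × Fin d × Fin N) ∈ Sk :=
      fun i => Finset.mem_image_of_mem _ (Finset.mem_univ i)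
    have hmemj : ∀ i : Fin N, ((j, s, i) : ℕ × Fin d × Fin N) ∈ Sj :=
      fun i => Finset.mem_image_of_mem _ (Finset.mem_univ i)
    set gk : ((p : Sk) → ℝ) → ℝ :=
      fun v => Real.log (1 - C.γ + 2 * ⨆ i : Fin N, |v ⟨(k, s, i), hmemk i⟩|) with hgk
    set gj : ((p : Sj) → ℝ) → ℝ :=
      fun v => Real.log (1 - C.γ + 2 * ⨆ i : Fin N, |v ⟨(j, s, i), hmemj i⟩|) with hgj
    have hgkmeas : Measurable gk :=
      (((Measurable.iSup (fun i : Fin N =>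
        (measurable_pi_apply (⟨(k, s, i), hmemk i⟩ : Sk)).abs)).const_mul 2).const_add
        (1 - C.γ)).log
    have hgjmeas : Measurable gj :=
      (((Measurable.iSup (fun i : Fin N =>
        (measurable_pi_apply (⟨(j, s, i), hmemj i⟩ : Sj)).abs)).const_mul 2).const_add
        (1 - C.γ)).log
    exact hbase.comp hgkmeas hgjmeas
  -- strong law of large numbers
  have hslln : ∀ s : Fin d, ∀ᵐ ω ∂P, Tendsto
      (fun n : ℕ => (n : ℝ)⁻¹ • ∑ l ∈ Finset.range n, Z s l ω) atTop
      (nhds (∫ ω, Z s 0 ω ∂P)) := fun s =>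
    ProbabilityTheory.strong_law_ae _ (hZint s 0) (hindep s) (fun k => hident s k)
  set r : Fin d → ℝ := fun s => Real.exp ((∫ ω, Z s 0 ω ∂P) / 2) with hrdef
  have hr0 : ∀ s, 0 < r s := fun s => Real.exp_pos _
  have hr1 : ∀ s, r s < 1 := fun s => by
    rw [hrdef]
    have := hμneg s
    exact Real.exp_lt_one_iff.2 (by linarith)
  -- a.s. summability of M_k r^k
  have hE2 : ∀ s, ∀ᵐ ω ∂P, Summable (fun k => M s k ω * r s ^ k) := by
    intro s
    have hmeask : ∀ k : ℕ, Measurable (fun ω => ENNReal.ofReal (M s k ω * r s ^ k)) :=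
      fun k => ENNReal.measurable_ofReal.comp ((hMmeas s k).mul_const _)
    have hlint : ∫⁻ ω, ∑' k, ENNReal.ofReal (M s k ω * r s ^ k) ∂P ≠ ⊤ := by
      rw [lintegral_tsum (fun k => (hmeask k).aemeasurable)]
      have hterm : ∀ k, ∫⁻ ω, ENNReal.ofReal (M s k ω * r s ^ k) ∂P
          ≤ ENNReal.ofReal B * ENNReal.ofReal (r s) ^ k := by
        intro k
        have h1 : ∀ ω, ENNReal.ofReal (M s k ω * r s ^ k)
            = ENNReal.ofReal (M s k ω) * ENNReal.ofReal (r s ^ k) :=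
          fun ω => ENNReal.ofReal_mul (hMnn s k ω)
        simp only [h1]
        rw [lintegral_mul_const _ (hMmeas s k).ennreal_ofReal,
          ← ofReal_integral_eq_lintegral_ofReal (hMbd s k).1 (Filter.Eventually.of_forall (hMnn s k)),
          ENNReal.ofReal_pow (hr0 s).le]
        exact mul_le_mul_left (ENNReal.ofReal_le_ofReal (hMbd s k).2) _
      refine ne_top_of_le_ne_top ?_ (ENNReal.tsum_le_tsum hterm)
      rw [ENNReal.tsum_mul_left, ENNReal.tsum_geometric]
      refine ENNReal.mul_ne_top ENNReal.ofReal_ne_top (ENNReal.inv_ne_top.2 ?_)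
      rw [← pos_iff_ne_zero, tsub_pos_iff_lt]
      exact ENNReal.ofReal_lt_one.2 (hr1 s)
    have hae := ae_lt_top (Measurable.ennreal_tsum hmeask) hlint
    filter_upwards [hae] with ω hω
    have hnn : ∀ k, 0 ≤ M s k ω * r s ^ k :=
      fun k => mul_nonneg (hMnn s k ω) (pow_nonneg (hr0 s).le k)
    have h2 : ∑' k, (((M s k ω * r s ^ k).toNNReal : NNReal) : ENNReal) ≠ ⊤ := hω.ne
    have h3 := ENNReal.tsum_coe_ne_top_iff_summable.1 h2
    have h4 := NNReal.summable_coe.2 h3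
    refine h4.congr (fun k => ?_)
    exact Real.coe_toNNReal _ (hnn k)
  -- choose the limit function
  set xinf : Ω → EuclideanSpace ℝ (Fin d) := fun ω =>
    if h : ∃ l, Tendsto (fun k => C.x k 0 ω) atTop (nhds l) then h.choose else 0 with hxinfdef
  have hkey : ∀ᵐ ω ∂P, (∀ s, Tendsto (fun k => vdiam (C.y k s ω)) atTop (nhds 0))
      ∧ ∃ l, Tendsto (fun k => C.x k 0 ω) atTop (nhds l) := by
    have hae1 : ∀ᵐ ω ∂P, ∀ s : Fin d, Tendsto
        (fun n : ℕ => (n : ℝ)⁻¹ • ∑ l ∈ Finset.range n, Z s l ω) atTop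
        (nhds (∫ ω, Z s 0 ω ∂P)) := ae_all_iff.2 hslln
    have hae2 : ∀ᵐ ω ∂P, ∀ s : Fin d, Summable (fun k => M s k ω * r s ^ k) :=
      ae_all_iff.2 hE2
    filter_upwards [hae1, hae2] with ω h1 h2
    have hDle : ∀ s k, vdiam (C.y k s ω)
        ≤ vdiam (C.y 0 s ω) * Real.exp (∑ l ∈ Finset.range k, Z s l ω) := by
      intro s k
      induction k with
      | zero => simp
      | succ k ih =>
        have hrec := diam_rec C hC k s ω
        have hexp : (1 - C.γ + 2 * M s k ω) = Real.exp (Z s k ω) :=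
          (Real.exp_log (hWpos s k ω)).symm
        calc vdiam (C.y (k+1) s ω) ≤ Real.exp (Z s k ω) * vdiam (C.y k s ω) := by
              rw [← hexp]; exact hrec
          _ ≤ Real.exp (Z s k ω) * (vdiam (C.y 0 s ω)
              * Real.exp (∑ l ∈ Finset.range k, Z s l ω)) :=
              mul_le_mul_of_nonneg_left ih (Real.exp_pos _).le
          _ = vdiam (C.y 0 s ω) * Real.exp (∑ l ∈ Finset.range (k+1), Z s l ω) := by
              rw [Finset.sum_range_succ, Real.exp_add]; ring
    have hgeom : ∀ s, ∃ K, ∀ k ≥ K, vdiam (C.y k s ω)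
        ≤ vdiam (C.y 0 s ω) * r s ^ k := by
      intro s
      set μs := ∫ ω, Z s 0 ω ∂P with hμs
      have hμlt : μs < μs / 2 := by have := hμneg s; linarith
      have hev : ∀ᶠ n : ℕ in atTop,
          (n : ℝ)⁻¹ • ∑ l ∈ Finset.range n, Z s l ω ≤ μs / 2 :=
        (h1 s).eventually (eventually_le_nhds hμlt)
      obtain ⟨K0, hK0⟩ := eventually_atTop.1 hev
      refine ⟨max K0 1, fun k hk => ?_⟩
      have hkK : K0 ≤ k := le_trans (le_max_left _ _) hk
      have hk1 : 1 ≤ k := le_trans (le_max_right _ _) hk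
      have hkpos : (0 : ℝ) < k := by exact_mod_cast hk1
      have h3 := hK0 k hkK
      rw [smul_eq_mul] at h3
      have hS : ∑ l ∈ Finset.range k, Z s l ω ≤ μs / 2 * k := by
        have h4 : (k : ℝ) * ((k : ℝ)⁻¹ * ∑ l ∈ Finset.range k, Z s l ω)
            ≤ (k : ℝ) * (μs / 2) := mul_le_mul_of_nonneg_left h3 hkpos.le
        rw [← mul_assoc, mul_inv_cancel₀ hkpos.ne', one_mul] at h4
        linarith
      refine (hDle s k).trans ?_
      refine mul_le_mul_of_nonneg_left ?_ (vdiam_nonneg _)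
      rw [hrdef]
      calc Real.exp (∑ l ∈ Finset.range k, Z s l ω) ≤ Real.exp (μs / 2 * k) :=
            Real.exp_le_exp.2 hS
        _ = Real.exp (μs / 2) ^ k := by
            rw [← Real.exp_nat_mul]; ring_nf
    constructor
    · intro s
      obtain ⟨K, hK⟩ := hgeom s
      have hlim : Tendsto (fun k : ℕ => vdiam (C.y 0 s ω) * r s ^ k) atTop (nhds 0) := by
        have := tendsto_pow_atTop_nhds_zero_of_lt_one (hr0 s).le (hr1 s)
        simpa using this.const_mul (vdiam (C.y 0 s ω))
      refine squeeze_zero_norm' ?_ hlim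
      filter_upwards [eventually_ge_atTop K] with k hk
      rw [Real.norm_eq_abs, abs_of_nonneg (vdiam_nonneg _)]
      exact hK k hk
    · have hconv : ∀ s, ∃ l, Tendsto (fun k => C.x k 0 ω s) atTop (nhds l) := by
        intro s
        obtain ⟨K, hK⟩ := hgeom s
        set D0 := vdiam (C.y 0 s ω) with hD0
        have hD0nn : 0 ≤ D0 := vdiam_nonneg _
        have hg : Summable (fun k => (C.γ + M s k ω) * vdiam (C.y k s ω)) := by
          rw [← summable_nat_add_iff K]
          have hF : Summable (fun k => C.γ * (D0 * r s ^ k) + D0 * (M s k ω * r s ^ k)) := by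
            refine Summable.add ?_ ((h2 s).mul_left D0)
            exact ((summable_geometric_of_lt_one (hr0 s).le (hr1 s)).mul_left D0).mul_left C.γ
          have hFshift : Summable (fun k => C.γ * (D0 * r s ^ (k + K))
              + D0 * (M s (k + K) ω * r s ^ (k + K))) := (summable_nat_add_iff K).2 hF
          refine Summable.of_nonneg_of_le (fun k => ?_) (fun k => ?_) hFshift
          · exact mul_nonneg (by have := hMnn s (k + K) ω; linarith) (vdiam_nonneg _)
          · have hD := hK (k + K) (Nat.le_add_left _ _)
            have hMk := hMnn s (k + K) ω
            have hrk : (0:ℝ) ≤ r s ^ (k + K) := pow_nonneg (hr0 s).le _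
            nlinarith [mul_le_mul_of_nonneg_left hD (by linarith : (0:ℝ) ≤ C.γ + M s (k + K) ω)]
        have hdist : Summable (fun k => dist (C.x k 0 ω s) (C.x (k+1) 0 ω s)) := by
          refine Summable.of_nonneg_of_le (fun k => dist_nonneg) (fun k => ?_) hg
          rw [Real.dist_eq, abs_sub_comm]
          exact step_bound C hC k s ω 0
        exact cauchySeq_tendsto_of_complete (cauchySeq_of_summable_dist hdist)
      choose l hl using hconv
      exact ⟨WithLp.toLp 2 l, tendsto_euclidean (L := WithLp.toLp 2 l) hl⟩
  refine ⟨xinf, fun i => ?_⟩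
  filter_upwards [hkey] with ω hω
  obtain ⟨hdiam, hex⟩ := hω
  have hx0 : Tendsto (fun k => C.x k 0 ω) atTop (nhds (xinf ω)) := by
    rw [hxinfdef]
    simp only
    rw [dif_pos hex]
    exact hex.choose_spec
  refine tendsto_euclidean (fun s => ?_)
  have h1 : Tendsto (fun k => C.x k 0 ω s) atTop (nhds (xinf ω s)) :=
    tendsto_euclidean_coord hx0 s
  have h2 : Tendsto (fun k => C.x k i ω s - C.x k 0 ω s) atTop (nhds 0) := by
    refine squeeze_zero_norm (fun k => ?_) (hdiam s)
    have hle : |C.y k s ω i - C.y k s ω 0| ≤ vdiam (C.y k s ω) :=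
      abs_sub_le_vdiam (C.y k s ω) i (cinf_le_fin (C.y k s ω) 0) (fin_le_csup (C.y k s ω) 0)
    exact hle
  have h3 := h2.add h1
  simpa using h3
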